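/- Let ℱ ⊆ 𝒮 and consider the graph obtained from the set-cover gadget graph G(U,𝒮) by contracting all edges g s_j with S_j ∈ ℱ — that is, the graph whose vertex set is obtained from V(G(U,𝒮)) by replacing the set {g} ∪ {s_j : S_j ∈ ℱ} with a single new vertex g*, where g* is adjacent to exactly those remaining vertices that are adjacent in G(U,𝒮) to some vertex of {g} ∪ {s_j : S_j ∈ ℱ}, and all other adjacencies are unchanged. If this contracted graph is chordal, then ℱ is a set cover of U, i.e., every element of U belongs to some member of ℱ. -/

import Mathlib

/-- Vertices of the set-cover gadget graph: a vertex `s j` for every set `S_j`,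
vertices `a i`, `b i`, `c i` for every universe element `u_i`, and a special vertex `g`. -/
inductive SCVert (n m : ℕ) where
  | s : Fin m → SCVert n m
  | a : Fin n → SCVert n m
  | b : Fin n → SCVert n m
  | c : Fin n → SCVert n m
  | g : SCVert n m
deriving DecidableEq

/-- The base relation for the edges of the set-cover gadget graph for the family
`S : Fin m → Set (Fin n)`. -/
def scRel (n m : ℕ) (S : Fin m → Set (Fin n)) : SCVert n m → SCVert n m → Prop
  | .s _, .s _ => True
  | .g, .s _ => True
  | .g, .a _ => True
  | .g, .b _ => True
  | .a i, .c i' => i = i'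
  | .b i, .c i' => i = i'
  | .c i, .s j => i ∈ S j
  | _, _ => False

/-- The set-cover gadget graph `G(U, 𝒮)`. -/
def scGadget (n m : ℕ) (S : Fin m → Set (Fin n)) : SimpleGraph (SCVert n m) :=
  SimpleGraph.fromRel (scRel n m S)

/-- The graph obtained from the set-cover gadget graph by contracting all edges
`g s_j` with `j ∈ F`: the vertices `{g} ∪ {s_j : j ∈ F}` are replaced by the single
vertex `g` (playing the role of `g*`), which is adjacent to exactly those remaining
vertices adjacent in the gadget graph to some vertex of `{g} ∪ {s_j : j ∈ F}`;
all other adjacencies are unchanged. -/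
def scContracted (n m : ℕ) (S : Fin m → Set (Fin n)) (F : Set (Fin m)) :
    SimpleGraph {v : SCVert n m // ∀ j ∈ F, v ≠ SCVert.s j} :=
  SimpleGraph.fromRel (fun x y =>
    if x.val = SCVert.g then
      (scGadget n m S).Adj SCVert.g y.val ∨
        ∃ j ∈ F, (scGadget n m S).Adj (SCVert.s j) y.val
    else (scGadget n m S).Adj x.val y.val)

/-- `C` is (the vertex set of) an induced cycle on `ℓ` vertices of `G`. -/
def IsInducedCycle {α : Type*} (G : SimpleGraph α) (ℓ : ℕ) (C : Set α) : Prop :=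
  C.ncard = ℓ ∧ Nonempty (G.induce C ≃g SimpleGraph.cycleGraph ℓ)

/-- If contracting the edges `g s_j`, `j ∈ F`, of the set-cover gadget graph yields a
chordal graph (no induced cycle on ≥ 4 vertices), then `F` indexes a set cover of the
universe. -/
theorem stmt_14 (n m : ℕ) (S : Fin m → Set (Fin n)) (F : Set (Fin m))
    (hchordal : ∀ ℓ : ℕ, 4 ≤ ℓ →
      ∀ C : Set {v : SCVert n m // ∀ j ∈ F, v ≠ SCVert.s j},
        ¬ IsInducedCycle (scContracted n m S F) ℓ C) :
    ∀ i : Fin n, ∃ j ∈ F, i ∈ S j := by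
  intro i
  by_contra hcov
  push_neg at hcov
  classical
  let f : Fin 4 → {v : SCVert n m // ∀ j ∈ F, v ≠ SCVert.s j} :=
    ![⟨SCVert.g, fun j _ h => nomatch h⟩,
      ⟨SCVert.a i, fun j _ h => nomatch h⟩,
      ⟨SCVert.c i, fun j _ h => nomatch h⟩,
      ⟨SCVert.b i, fun j _ h => nomatch h⟩]
  have hinj : Function.Injective f := by
    intro p q hpq
    fin_cases p <;> fin_cases q <;> simp_all [f, Subtype.ext_iff]
  have h01 : (scContracted n m S F).Adj (f 0) (f 1) := by
    simp [f, scContracted, scGadget, SimpleGraph.fromRel_adj, scRel, Subtype.ext_iff]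
  have h12 : (scContracted n m S F).Adj (f 1) (f 2) := by
    simp [f, scContracted, scGadget, SimpleGraph.fromRel_adj, scRel, Subtype.ext_iff]
  have h23 : (scContracted n m S F).Adj (f 2) (f 3) := by
    simp [f, scContracted, scGadget, SimpleGraph.fromRel_adj, scRel, Subtype.ext_iff]
  have h03 : (scContracted n m S F).Adj (f 0) (f 3) := by
    simp [f, scContracted, scGadget, SimpleGraph.fromRel_adj, scRel, Subtype.ext_iff]
  have h02 : ¬ (scContracted n m S F).Adj (f 0) (f 2) := by
    simp only [f]
    simp [scContracted, scGadget, SimpleGraph.fromRel_adj, scRel, Subtype.ext_iff]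
    exact hcov
  have h13 : ¬ (scContracted n m S F).Adj (f 1) (f 3) := by
    simp [f, scContracted, scGadget, SimpleGraph.fromRel_adj, scRel, Subtype.ext_iff]
  have key : ∀ p q : Fin 4, (scContracted n m S F).Adj (f p) (f q) ↔
      (SimpleGraph.cycleGraph 4).Adj p q := by
    intro p q
    fin_cases p <;> fin_cases q
    · exact iff_of_false ((scContracted n m S F).irrefl) (by decide)
    · exact iff_of_true h01 (by decide)
    · exact iff_of_false h02 (by decide)
    · exact iff_of_true h03 (by decide)
    · exact iff_of_true h01.symm (by decide)
    · exact iff_of_false ((scContracted n m S F).irrefl) (by decide)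
    · exact iff_of_true h12 (by decide)
    · exact iff_of_false h13 (by decide)
    · exact iff_of_false (fun h => h02 h.symm) (by decide)
    · exact iff_of_true h12.symm (by decide)
    · exact iff_of_false ((scContracted n m S F).irrefl) (by decide)
    · exact iff_of_true h23 (by decide)
    · exact iff_of_true h03.symm (by decide)
    · exact iff_of_false (fun h => h13 h.symm) (by decide)
    · exact iff_of_true h23.symm (by decide)
    · exact iff_of_false ((scContracted n m S F).irrefl) (by decide)
  set C : Set {v : SCVert n m // ∀ j ∈ F, v ≠ SCVert.s j} := Set.range f with hC
  have hcard : C.ncard = 4 := by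
    rw [← Nat.card_coe_set_eq, hC, Nat.card_range_of_injective hinj]
    simp
  let e : Fin 4 ≃ ↥C := Equiv.ofInjective f hinj
  have iso : SimpleGraph.cycleGraph 4 ≃g (scContracted n m S F).induce C :=
    ⟨e, fun {p q} => key p q⟩
  exact hchordal 4 le_rfl C ⟨hcard, ⟨iso.symm⟩⟩
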